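/- Let A be an abelian category, n ≥ 0, and f : I_n → A a functor. Then the objects cr(f) and c̄r(f∘z) of A are isomorphic. -/

import Mathlib

open CategoryTheory CategoryTheory.Limits

universe v u

variable {A : Type u} [Category.{v} A] [Abelian A]

attribute [local instance] CategoryTheory.Abelian.hasFiniteBiproducts

lemma aux_key {n : ℕ} {X : A} (f : Finset (Fin n) → (X ⟶ X))
    (hcomp : ∀ S T : Finset (Fin n), f S ≫ f T = f (S ∩ T))
    {T : Finset (Fin n)} (hT : T ≠ Finset.univ) :
    f T ≫ (∑ S : Finset (Fin n), ((-1 : ℤ) ^ S.card) • f (Finset.univ \ S)) = 0 := by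
  obtain ⟨a, ha⟩ : ∃ a, a ∉ T := by
    by_contra h
    push_neg at h
    exact hT (Finset.eq_univ_iff_forall.2 h)
  rw [Preadditive.comp_sum]
  simp only [Preadditive.comp_zsmul, hcomp]
  have hTS : ∀ S : Finset (Fin n), T ∩ (Finset.univ \ S) = T \ S := by
    intro S; ext x; simp [and_comm]
  simp only [hTS]
  apply Finset.sum_ninvolution (g := fun S => if a ∈ S then S.erase a else insert a S)
  · intro S
    by_cases hS : a ∈ S
    · simp only [hS, if_true]
      have hsd : T \ S.erase a = T \ S := by
        ext x; simp only [Finset.mem_sdiff, Finset.mem_erase]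
        constructor
        · rintro ⟨hx, h2⟩; exact ⟨hx, fun hxS => h2 ⟨fun h => ha (h ▸ hx), hxS⟩⟩
        · rintro ⟨hx, h2⟩; exact ⟨hx, fun h => h2 h.2⟩
      have hc : S.card = (S.erase a).card + 1 := (Finset.card_erase_add_one hS).symm
      rw [hsd, hc, pow_succ, ← add_smul]
      ring_nf
      simp
    · simp only [hS, if_false]
      have hsd : T \ insert a S = T \ S := by
        ext x; simp only [Finset.mem_sdiff, Finset.mem_insert]
        constructor
        · rintro ⟨hx, h2⟩; exact ⟨hx, fun hxS => h2 (Or.inr hxS)⟩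
        · rintro ⟨hx, h2⟩
          exact ⟨hx, fun h => h.elim (fun h => ha (h ▸ hx)) h2⟩
      have hc : (insert a S).card = S.card + 1 := Finset.card_insert_of_notMem hS
      rw [hsd, hc, pow_succ, ← add_smul]
      ring_nf
      simp
  · intro S _
    by_cases hS : a ∈ S
    · simp only [hS, if_true]
      exact fun h => Finset.notMem_erase a S (by rw [h]; exact hS)
    · simp only [hS, if_false]
      exact fun h => hS (h ▸ Finset.mem_insert_self a S)
  · intro S; exact Finset.mem_univ _
  · intro S
    by_cases hS : a ∈ S
    · simp [hS, Finset.notMem_erase, Finset.insert_erase hS]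
    · simp [hS, Finset.erase_insert hS]

/-- Statement 6: let `A` be an abelian category, `n ≥ 0`, and `f : I_n ⥤ A` a functor,
encoded as an object `X = f(•)` together with endomorphisms `f S` for `S ⊆ n̲` (here
`n̲ = Fin n`) satisfying `f S ≫ f T = f (S ∩ T)` and `f univ = 𝟙 X`.  Then the
cross-effect `cr(f) = im( Σ_{S ⊆ n̲} (−1)^{|S|} f(n̲ ∖ S) )` is isomorphic to
`c̄r(f ∘ z) = coker( ⊕_{S ⊊ n̲} f S : ⊕_{S ⊊ n̲} X ⟶ X )`. -/
theorem cr_iso_crbar (n : ℕ) (X : A) (f : Finset (Fin n) → (X ⟶ X))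
    (hcomp : ∀ S T : Finset (Fin n), f S ≫ f T = f (S ∩ T))
    (hid : f Finset.univ = 𝟙 X) :
    Nonempty
      (Limits.image (∑ S : Finset (Fin n), ((-1 : ℤ) ^ S.card) • f (Finset.univ \ S))
        ≅ cokernel (biproduct.desc
            (f := fun _ : {S : Finset (Fin n) // S ≠ Finset.univ} => X)
            (fun S => f S.1))) := by
  set e : X ⟶ X := ∑ S : Finset (Fin n), ((-1 : ℤ) ^ S.card) • f (Finset.univ \ S) with he
  set d := biproduct.desc (f := fun _ : {S : Finset (Fin n) // S ≠ Finset.univ} => X)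
      (fun S => f S.1) with hd
  have hne : ∀ S : Finset (Fin n), S.Nonempty → Finset.univ \ S ≠ Finset.univ := by
    intro S ⟨x, hx⟩ h
    have : x ∈ Finset.univ \ S := by rw [h]; exact Finset.mem_univ x
    exact (Finset.mem_sdiff.1 this).2 hx
  -- f T ≫ cokernel.π d = 0 for T ≠ univ
  have hfπ : ∀ T : Finset (Fin n), T ≠ Finset.univ → f T ≫ cokernel.π d = 0 := by
    intro T hT
    have : f T = biproduct.ι (fun _ : {S : Finset (Fin n) // S ≠ Finset.univ} => X) ⟨T, hT⟩ ≫ d := by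
      simp [hd]
    rw [this, Category.assoc, cokernel.condition, comp_zero]
  -- e ≫ π = π
  have heπ : e ≫ cokernel.π d = cokernel.π d := by
    rw [he, Preadditive.sum_comp]
    rw [Finset.sum_eq_single (∅ : Finset (Fin n))]
    · simp [hid]
    · intro S _ hS
      rw [Preadditive.zsmul_comp, hfπ _ (hne S (Finset.nonempty_iff_ne_empty.2 hS)), smul_zero]
    · simp
  -- e idempotent
  have hee : e ≫ e = e := by
    conv_lhs => rw [he, Preadditive.sum_comp]
    rw [Finset.sum_eq_single (∅ : Finset (Fin n))]
    · simp [hid, he]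
    · intro S _ hS
      rw [Preadditive.zsmul_comp, aux_key f hcomp (hne S (Finset.nonempty_iff_ne_empty.2 hS)),
        smul_zero]
    · simp
  have hde : d ≫ factorThruImage e = 0 := by
    apply biproduct.hom_ext'
    intro ⟨S, hS⟩
    rw [← Category.assoc]
    simp only [hd, biproduct.ι_desc, comp_zero]
    rw [← cancel_mono (image.ι e), Category.assoc, image.fac, zero_comp]
    exact aux_key f hcomp hS
  have hιp : image.ι e ≫ factorThruImage e = 𝟙 _ := by
    rw [← cancel_mono (image.ι e), Category.assoc, image.fac, Category.id_comp]
    rw [← cancel_epi (factorThruImage e), ← Category.assoc, image.fac, hee]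
  refine ⟨⟨image.ι e ≫ cokernel.π d, cokernel.desc d (factorThruImage e) hde, ?_, ?_⟩⟩
  · rw [Category.assoc, cokernel.π_desc, hιp]
  · rw [← cancel_epi (cokernel.π d), ← Category.assoc, cokernel.π_desc, Category.comp_id,
      ← Category.assoc, image.fac, heπ]
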